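/- The sequence p_k = (2/(4^k k)) * binomial(2k-2, k-1) satisfies Σ_{k≥1} p_k = 1. -/
import Mathlib

noncomputable def aSeq (n : ℕ) : ℝ := (Nat.centralBinom n : ℝ) / 4 ^ n

lemma aSeq_nonneg (n : ℕ) : 0 ≤ aSeq n := by
  unfold aSeq; positivity

lemma aSeq_succ (n : ℕ) :
    aSeq (n + 1) = aSeq n - 2 / (4 ^ (n + 1) * ((n : ℝ) + 1)) * (Nat.centralBinom n : ℝ) := by
  have h := Nat.succ_mul_centralBinom_succ n
  have h' : ((n : ℝ) + 1) * (Nat.centralBinom (n + 1) : ℝ)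
      = 2 * (2 * n + 1) * (Nat.centralBinom n : ℝ) := by
    exact_mod_cast congrArg (Nat.cast : ℕ → ℝ) h
  have hn : ((n : ℝ) + 1) ≠ 0 := by positivity
  have h4 : (4 : ℝ) ^ (n + 1) ≠ 0 := by positivity
  have hc : (Nat.centralBinom (n + 1) : ℝ)
      = 2 * (2 * n + 1) * (Nat.centralBinom n : ℝ) / ((n : ℝ) + 1) := by
    field_simp
    linarith [h']
  unfold aSeq
  rw [hc, pow_succ]
  field_simp
  ring

lemma aSeq_sq (n : ℕ) : aSeq n ^ 2 * ((n : ℝ) + 1) ≤ 1 := by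
  induction n with
  | zero => simp [aSeq, Nat.centralBinom_zero]
  | succ n ih =>
    have key : ((n : ℝ) + 1) * (Nat.centralBinom (n + 1) : ℝ)
        = 2 * (2 * n + 1) * (Nat.centralBinom n : ℝ) := by
      exact_mod_cast congrArg (Nat.cast : ℕ → ℝ) (Nat.succ_mul_centralBinom_succ n)
    have hn : (0:ℝ) < (n : ℝ) + 1 := by positivity
    have h4 : (0:ℝ) < (4:ℝ) ^ n := by positivity
    have ha : aSeq (n+1) = aSeq n * (2 * n + 1) / (2 * (n + 1)) := by
      unfold aSeq
      rw [pow_succ]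
      field_simp
      nlinarith [key]
    rw [ha]
    rw [div_pow, div_mul_eq_mul_div, div_le_one (by positivity)]
    push_cast
    have hpoly : (2*(n:ℝ)+1)^2*((n:ℝ)+2) ≤ 4*((n:ℝ)+1)^3 := by
      nlinarith [Nat.cast_nonneg (α := ℝ) n]
    have h1 : aSeq n ^ 2 * ((2*(n:ℝ)+1)^2*((n:ℝ)+2)) ≤ aSeq n ^ 2 * (4*((n:ℝ)+1)^3) :=
      mul_le_mul_of_nonneg_left hpoly (sq_nonneg _)
    have h2 : aSeq n ^ 2 * (4*((n:ℝ)+1)^3) ≤ 4*((n:ℝ)+1)^2 := by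
      nlinarith [mul_le_mul_of_nonneg_right ih (show (0:ℝ) ≤ 4*((n:ℝ)+1)^2 by positivity)]
    nlinarith [h1, h2]

lemma aSeq_tendsto : Filter.Tendsto aSeq Filter.atTop (nhds 0) := by
  have hsq : Filter.Tendsto (fun n : ℕ => aSeq n ^ 2) Filter.atTop (nhds 0) := by
    have hub : ∀ n : ℕ, aSeq n ^ 2 ≤ 1 / ((n : ℝ) + 1) := by
      intro n
      rw [le_div_iff₀ (by positivity)]
      exact aSeq_sq n
    have hlb : ∀ n : ℕ, 0 ≤ aSeq n ^ 2 := fun n => sq_nonneg _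
    refine squeeze_zero hlb hub ?_
    exact tendsto_one_div_add_atTop_nhds_zero_nat
  have := hsq.sqrt
  simp only [Real.sqrt_zero] at this
  convert this using 2 with n
  rw [Real.sqrt_sq (aSeq_nonneg n)]

/-- The sequence `p k = (2/(4^k k)) * binomial (2k-2) (k-1)`, `k ≥ 1`, sums to `1`. -/
theorem stmt1 :
    HasSum (fun k : ℕ =>
      2 / (4 ^ (k + 1) * ((k : ℝ) + 1)) * (Nat.choose (2 * (k + 1) - 2) k : ℝ)) 1 := by
  have hterm : ∀ k : ℕ, (Nat.choose (2 * (k + 1) - 2) k : ℕ) = Nat.centralBinom k := by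
    intro k
    have : 2 * (k + 1) - 2 = 2 * k := by omega
    rw [this, Nat.centralBinom]
  rw [hasSum_iff_tendsto_nat_of_nonneg]
  · have hpartial : ∀ n : ℕ,
        (∑ k ∈ Finset.range n,
          2 / (4 ^ (k + 1) * ((k : ℝ) + 1)) * (Nat.choose (2 * (k + 1) - 2) k : ℝ))
        = 1 - aSeq n := by
      intro n
      induction n with
      | zero => simp [aSeq, Nat.centralBinom_zero]
      | succ n ih =>
        rw [Finset.sum_range_succ, ih, hterm n, aSeq_succ n]
        ring
    simp only [hpartial]
    have : Filter.Tendsto (fun n : ℕ => 1 - aSeq n) Filter.atTop (nhds (1 - 0)) :=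
      Filter.Tendsto.const_sub 1 aSeq_tendsto
    simpa using this
  · intro k
    positivity
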